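/- Let M ⊂ ℝ³ be a closed set which is locally a real-analytic minimal graph, i.e. for every p ∈ M there exist r > 0, an affine isometry R of ℝ³, an open set U ⊆ ℝ² and a real-analytic function v : U → ℝ satisfying the minimal surface equation, such that M ∩ B(p,r) = R({(X, v(X)) : X ∈ U}) ∩ B(p,r). If M contains a nondegenerate segment {(x,0,0) : x ∈ [a,b]} (with a < b) of the straight line D = {(x,0,0) : x ∈ ℝ}, then M contains the whole line D. -/

import Mathlib

open Set Metric

noncomputable section

/-- The Euclidean plane. -/
abbrev E2 : Type := EuclideanSpace ℝ (Fin 2)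

/-- Euclidean 3-space. -/
abbrev E3 : Type := EuclideanSpace ℝ (Fin 3)

/-- Partial derivative of `u : ℝ² → ℝ` in the `i`-th coordinate direction. -/
noncomputable def pd (i : Fin 2) (u : E2 → ℝ) (X : E2) : ℝ :=
  fderiv ℝ u X (EuclideanSpace.single i (1 : ℝ))

/-- The minimal surface operator:  `u` satisfies the minimal surface equation at `X`
iff `MSEop u X = 0`. -/
noncomputable def MSEop (u : E2 → ℝ) (X : E2) : ℝ :=
  (1 + (pd 1 u X) ^ 2) * pd 0 (pd 0 u) X
    - 2 * pd 0 u X * pd 1 u X * pd 1 (pd 0 u) X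
    + (1 + (pd 0 u X) ^ 2) * pd 1 (pd 1 u) X

/-- The graph of `u` over `Ω`, as a subset of `ℝ³`. -/
def graph3 (u : E2 → ℝ) (Ω : Set E2) : Set E3 :=
  (fun X => (WithLp.toLp 2 ![X 0, X 1, u X] : E3)) '' Ω

/-- `M ⊆ ℝ³` is locally a real-analytic minimal graph:  near each of its points, up to an
affine isometry of `ℝ³`, it is the graph of a real-analytic solution of the minimal
surface equation. -/
def LocallyAnalyticMinimalGraph (M : Set E3) : Prop :=
  ∀ p ∈ M, ∃ r : ℝ, 0 < r ∧ ∃ R : E3 ≃ᵃⁱ[ℝ] E3, ∃ U : Set E2, ∃ v : E2 → ℝ,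
    IsOpen U ∧ AnalyticOnNhd ℝ v U ∧ (∀ X ∈ U, MSEop v X = 0) ∧
    M ∩ ball p r = (R '' graph3 v U) ∩ ball p r

noncomputable def Pmap : E3 →L[ℝ] E2 :=
  (PiLp.continuousLinearEquiv 2 ℝ (fun _ : Fin 2 => ℝ)).symm.toContinuousLinearMap.comp
    (ContinuousLinearMap.pi ![EuclideanSpace.proj 0, EuclideanSpace.proj 1])

lemma Pmap_apply0 (y : E3) : Pmap y 0 = y 0 := by
  simp [Pmap, ContinuousLinearMap.pi_apply]
lemma Pmap_apply1 (y : E3) : Pmap y 1 = y 1 := by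
  simp [Pmap, ContinuousLinearMap.pi_apply]

lemma graph3_mem_iff (v : E2 → ℝ) (U : Set E2) (y : E3) :
    y ∈ graph3 v U ↔ (Pmap y ∈ U ∧ v (Pmap y) = y 2) := by
  constructor
  · rintro ⟨X, hX, rfl⟩
    have hP : Pmap (WithLp.toLp 2 ![X 0, X 1, v X] : E3) = X := by
      ext i
      fin_cases i
      · exact (Pmap_apply0 _).trans (by simp)
      · exact (Pmap_apply1 _).trans (by simp)
    rw [hP]
    exact ⟨hX, by simp⟩
  · rintro ⟨h1, h2⟩
    refine ⟨Pmap y, h1, ?_⟩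
    ext i
    fin_cases i
    · simpa using (Pmap_apply0 y)
    · simpa using (Pmap_apply1 y)
    · simpa using h2

lemma dist3 (s t : ℝ) : @dist E3 PseudoMetricSpace.toDist (WithLp.toLp 2 ![s,0,0]) (WithLp.toLp 2 ![t,0,0]) = |s - t| := by
  refine (EuclideanSpace.dist_eq (WithLp.toLp 2 ![s,0,0] : E3) (WithLp.toLp 2 ![t,0,0] : E3)).trans ?_
  simp [Fin.sum_univ_three, Real.sqrt_sq_eq_abs, Real.dist_eq]

lemma ell_smul (t : ℝ) : (WithLp.toLp 2 ![t,0,0] : E3) = t • (WithLp.toLp 2 ![1,0,0] : E3) := by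
  ext i; fin_cases i <;> simp

lemma localExtend (M : Set E3) (hMloc : LocallyAnalyticMinimalGraph M)
    (c ε : ℝ) (hε : 0 < ε) (hleft : ∀ t ∈ Ioc (c-ε) c, (WithLp.toLp 2 ![t,0,0] : E3) ∈ M) :
    ∃ δ > 0, ∀ t ∈ Ico c (c+δ), (WithLp.toLp 2 ![t,0,0] : E3) ∈ M := by
  have hc : (WithLp.toLp 2 ![c,0,0] : E3) ∈ M := hleft c ⟨by linarith, le_refl c⟩
  obtain ⟨r, hr, R, U, v, hU, hv, -, hMB⟩ := hMloc _ hc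
  set ℓ : ℝ → E3 := fun t => WithLp.toLp 2 ![t,0,0] with hℓ
  set g : ℝ → E3 := fun t => R.symm (ℓ t) with hgdef
  have hdist : ∀ t : ℝ, dist (ℓ t) (ℓ c) = |t - c| := fun t => dist3 t c
  have hmem : ∀ t : ℝ, |t - c| < r → ((ℓ t ∈ M) ↔ g t ∈ graph3 v U) := by
    intro t ht
    have hball : ℓ t ∈ ball (ℓ c) r := by
      rw [mem_ball, hdist]; exact ht
    constructor
    · intro h
      have h2 : ℓ t ∈ (R '' graph3 v U) ∩ ball (ℓ c) r := hMB ▸ ⟨h, hball⟩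
      obtain ⟨⟨z, hz, hzeq⟩, -⟩ := h2
      have : g t = z := by rw [hgdef]; simp only [← hzeq]; simp
      rwa [this]
    · intro h
      have h2 : ℓ t ∈ (R '' graph3 v U) ∩ ball (ℓ c) r :=
        ⟨⟨g t, h, by simp [hgdef]⟩, hball⟩
      rw [← hMB] at h2; exact h2.1
  have hgc : g c ∈ graph3 v U := (hmem c (by simpa using hr)).1 hc
  have hPc : Pmap (g c) ∈ U := ((graph3_mem_iff v U _).1 hgc).1
  -- analyticity of g
  have hgrepr : g = fun t => t • (R.symm.linearIsometryEquiv (WithLp.toLp 2 ![1,0,0] : E3)) + R.symm 0 := by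
    funext t
    have h1 : R.symm (ℓ t) = R.symm.linearIsometryEquiv (ℓ t) + R.symm 0 := by
      have := R.symm.map_vadd (0:E3) (ℓ t)
      simpa [vadd_eq_add] using this
    rw [hgdef]
    show R.symm (ℓ t) = _
    rw [h1]
    simp only [hℓ]
    rw [ell_smul t, map_smul]
  have hganal : ∀ t : ℝ, AnalyticAt ℝ g t := by
    intro t
    rw [hgrepr]
    exact ((analyticAt_id).smul analyticAt_const).add analyticAt_const
  have hgcont : Continuous g := by
    rw [hgrepr]
    exact (continuous_id.smul continuous_const).add continuous_const
  -- choose δ₀ for U-membership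
  have hUev : ∀ᶠ t in nhds c, Pmap (g t) ∈ U :=
    ((Pmap.continuous.comp hgcont).continuousAt).eventually_mem (hU.mem_nhds hPc)
  obtain ⟨δ₀, hδ₀, hδ₀U⟩ := Metric.eventually_nhds_iff.1 hUev
  set δ := min δ₀ (min r ε) with hδdef
  have hδ : 0 < δ := lt_min hδ₀ (lt_min hr hε)
  have hδr : δ ≤ r := le_trans (min_le_right _ _) (min_le_left _ _)
  have hδε : δ ≤ ε := le_trans (min_le_right _ _) (min_le_right _ _)
  have hδδ₀ : δ ≤ δ₀ := min_le_left _ _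
  set I := Ioo (c - δ) (c + δ) with hI
  have hIU : ∀ t ∈ I, Pmap (g t) ∈ U := by
    intro t ht
    apply hδ₀U
    rw [Real.dist_eq, abs_sub_lt_iff]
    constructor <;> [linarith [ht.2, hδδ₀]; linarith [ht.1, hδδ₀]]
  have habs : ∀ t ∈ I, |t - c| < δ := by
    intro t ht
    rw [abs_sub_lt_iff]; exact ⟨by linarith [ht.2], by linarith [ht.1]⟩
  set F : ℝ → ℝ := fun t => v (Pmap (g t)) - g t 2 with hF
  have hFanal : AnalyticOnNhd ℝ F I := by
    intro t ht
    have hin : AnalyticAt ℝ (fun s => Pmap (g s)) t := by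
      have := (Pmap.analyticAt (g t)).comp (hganal t)
      exact this
    have h1 : AnalyticAt ℝ (fun s => v (Pmap (g s))) t := by
      have := AnalyticAt.comp (f := fun s => Pmap (g s)) (x := t) (hv _ (hIU t ht)) hin
      exact this
    have h2 : AnalyticAt ℝ (fun s => g s 2) t := by
      have := ((EuclideanSpace.proj (2 : Fin 3)).analyticAt (g t)).comp (hganal t)
      exact this
    exact h1.sub h2
  have hFleft : ∀ t ∈ Ioo (c - δ) c, F t = 0 := by
    intro t ht
    have htI : t ∈ I := ⟨ht.1, by linarith [ht.2]⟩
    have habs' : |t - c| < δ := habs t htI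
    have hM : ℓ t ∈ M := hleft t ⟨by have := abs_sub_lt_iff.1 habs'; linarith [this.2], le_of_lt ht.2⟩
    have hg : g t ∈ graph3 v U := (hmem t (lt_of_lt_of_le habs' hδr)).1 hM
    have := ((graph3_mem_iff v U _).1 hg).2
    rw [hF]; simp only [sub_eq_zero]; exact this
  have hfreq : ∃ᶠ z in nhdsWithin c {c}ᶜ, F z = 0 := by
    have hev : ∀ᶠ z in nhdsWithin c (Iio c), F z = 0 :=
      Filter.eventually_of_mem (Ioo_mem_nhdsLT_of_mem ⟨by linarith, le_refl c⟩) hFleft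
    exact hev.frequently.filter_mono (nhdsWithin_mono c (fun x hx => ne_of_lt hx))
  have hFI : EqOn F 0 I :=
    hFanal.eqOn_zero_of_preconnected_of_frequently_eq_zero isPreconnected_Ioo
      ⟨by linarith, by linarith⟩ hfreq
  refine ⟨δ, hδ, ?_⟩
  intro t ht
  have htI : t ∈ I := ⟨by linarith [ht.1], ht.2⟩
  have h0 : F t = 0 := hFI htI
  have hg : g t ∈ graph3 v U :=
    (graph3_mem_iff v U _).2 ⟨hIU t htI, by rw [hF] at h0; exact sub_eq_zero.1 h0⟩
  exact (hmem t (lt_of_lt_of_le (habs t htI) hδr)).2 hg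

lemma ell_continuous : Continuous (fun t : ℝ => (WithLp.toLp 2 ![t,0,0] : E3)) := by
  have h : (fun t : ℝ => (WithLp.toLp 2 ![t,0,0] : E3)) = fun t => t • (WithLp.toLp 2 ![1,0,0] : E3) :=
    funext ell_smul
  rw [h]
  exact continuous_id.smul continuous_const

lemma rightRay (M : Set E3) (hMclosed : IsClosed M)
    (hMloc : LocallyAnalyticMinimalGraph M)
    (a b : ℝ) (hab : a < b)
    (hseg : ∀ x ∈ Icc a b, (WithLp.toLp 2 ![x, 0, 0] : E3) ∈ M) :
    ∀ x : ℝ, a ≤ x → (WithLp.toLp 2 ![x, 0, 0] : E3) ∈ M := by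
  set S : Set ℝ := {x | (WithLp.toLp 2 ![x,0,0] : E3) ∈ M} with hS
  have hScl : IsClosed S := hMclosed.preimage ell_continuous
  have hab' : Icc a b ⊆ S := fun y hy => hseg y hy
  intro x hx
  by_contra hxS
  set T : Set ℝ := {y : ℝ | Icc a y ⊆ S} with hT
  have hbT : b ∈ T := hab'
  have hTne : T.Nonempty := ⟨b, hbT⟩
  have hTbdd : BddAbove T := by
    refine ⟨max x b, fun t ht => ?_⟩
    by_contra hlt
    push_neg at hlt
    exact hxS (ht ⟨hx, le_trans (le_max_left x b) hlt.le⟩)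
  set c := sSup T with hc
  have hbc : b ≤ c := le_csSup hTbdd hbT
  have hIccS : Icc a c ⊆ S := by
    intro y hy
    rcases le_or_gt y b with h | h
    · exact hab' ⟨hy.1, h⟩
    · rcases lt_or_eq_of_le hy.2 with h2 | h2
      · obtain ⟨t, htT, hyt⟩ := exists_lt_of_lt_csSup hTne h2
        exact htT ⟨hy.1, hyt.le⟩
      · have hbc' : b < c := h2 ▸ h
        have hIco : Ico b c ⊆ S := by
          intro z hz
          obtain ⟨t, htT, hzt⟩ := exists_lt_of_lt_csSup hTne hz.2
          exact htT ⟨le_trans hab.le hz.1, hzt.le⟩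
        have hcl : c ∈ closure (Ico b c) := by
          rw [closure_Ico hbc'.ne]
          exact ⟨hbc'.le, le_refl c⟩
        have := closure_mono hIco hcl
        rw [hScl.closure_eq] at this
        rw [h2]
        exact this
  have hca : a < c := lt_of_lt_of_le hab hbc
  obtain ⟨δ, hδ, hδS⟩ := localExtend M hMloc c (c - a) (by linarith)
    (fun t ht => hIccS ⟨by have := ht.1; linarith, ht.2⟩)
  have hcT : c + δ/2 ∈ T := by
    intro y hy
    rcases le_or_gt y c with h | h
    · exact hIccS ⟨hy.1, h⟩
    · exact hδS y ⟨h.le, by have := hy.2; linarith⟩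
  have := le_csSup hTbdd hcT
  linarith


/-- **A complete minimal surface containing a segment of a line contains the whole
line.**  Let `M ⊂ ℝ³` be a closed set which is locally a real-analytic minimal graph.
If `M` contains the segment `{(x,0,0) : x ∈ [a,b]}` with `a < b`, then `M` contains the
whole line `D = {(x,0,0) : x ∈ ℝ}`. -/
theorem line_continuation_in_minimal_surface
    (M : Set E3) (hMclosed : IsClosed M)
    (hMloc : LocallyAnalyticMinimalGraph M)
    (a b : ℝ) (hab : a < b)
    (hseg : ∀ x ∈ Icc a b, (WithLp.toLp 2 ![x, 0, 0] : E3) ∈ M) :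
    ∀ x : ℝ, (WithLp.toLp 2 ![x, 0, 0] : E3) ∈ M := by
  intro x
  rcases le_or_gt a x with hx | hx
  · exact rightRay M hMclosed hMloc a b hab hseg x hx
  · -- reflect
    set ν : E3 ≃ᵃⁱ[ℝ] E3 := (LinearIsometryEquiv.neg ℝ).toAffineIsometryEquiv with hν
    have hνapp : ∀ w : E3, ν w = -w := by
      intro w
      rw [hν, LinearIsometryEquiv.coe_toAffineIsometryEquiv]
      rfl
    have hνneg : ∀ t : ℝ, ν (WithLp.toLp 2 ![t,0,0] : E3) = (WithLp.toLp 2 ![-t,0,0] : E3) := by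
      intro t
      rw [hνapp]
      ext i; fin_cases i <;> simp
    set M' : Set E3 := ⇑ν '' M with hM'
    have hM'closed : IsClosed M' := (ν.toHomeomorph.isClosedMap) M hMclosed
    have hM'loc : LocallyAnalyticMinimalGraph M' := by
      rintro p' ⟨p, hp, rfl⟩
      obtain ⟨r, hr, R, U, v, hU, hv, hMSE, hMB⟩ := hMloc p hp
      refine ⟨r, hr, R.trans ν, U, v, hU, hv, hMSE, ?_⟩
      have hball : ⇑ν '' ball p r = ball (ν p) r := by
        have := ν.toIsometryEquiv.image_ball p r
        rwa [AffineIsometryEquiv.coe_toIsometryEquiv] at this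
      have hinj : Function.Injective ⇑ν := ν.injective
      calc M' ∩ ball (ν p) r = ⇑ν '' M ∩ ⇑ν '' ball p r := by rw [hball]
        _ = ⇑ν '' (M ∩ ball p r) := (Set.image_inter hinj).symm
        _ = ⇑ν '' ((R '' graph3 v U) ∩ ball p r) := by rw [hMB]
        _ = ⇑ν '' (R '' graph3 v U) ∩ ⇑ν '' ball p r := Set.image_inter hinj
        _ = (⇑(R.trans ν) '' graph3 v U) ∩ ball (ν p) r := by
              rw [hball, ← Set.image_comp]
              rfl
    have hseg' : ∀ y ∈ Icc (-b) (-a), (WithLp.toLp 2 ![y, 0, 0] : E3) ∈ M' := by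
      intro y hy
      have hmem : (WithLp.toLp 2 ![(-y),0,0] : E3) ∈ M := hseg (-y) ⟨by linarith [hy.2], by linarith [hy.1]⟩
      refine ⟨WithLp.toLp 2 ![(-y),0,0], hmem, ?_⟩
      rw [hνneg]
      norm_num
    have hx' : (WithLp.toLp 2 ![(-x),0,0] : E3) ∈ M' :=
      rightRay M' hM'closed hM'loc (-b) (-a) (by linarith) hseg' (-x) (by linarith)
    obtain ⟨w, hw, hweq⟩ := hx'
    have hsymm : ν.symm (WithLp.toLp 2 ![(-x),0,0] : E3) = (WithLp.toLp 2 ![x,0,0] : E3) := by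
      have h1 : ν (WithLp.toLp 2 ![x,0,0] : E3) = (WithLp.toLp 2 ![(-x),0,0] : E3) := hνneg x
      have := congrArg (⇑ν.symm) h1
      rw [ν.symm_apply_apply] at this
      exact this.symm
    have hweq2 : w = (WithLp.toLp 2 ![x,0,0] : E3) := by
      have := congrArg (⇑ν.symm) hweq
      rwa [ν.symm_apply_apply, hsymm] at this
    rwa [hweq2] at hw

end
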